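/- Fix an integer k ≥ 4. Let H be a bipartite graph with parts A, B of size 2k and minimum degree at least k−1, and suppose there exist X ⊆ A and a set Ẽ of at most one edge of H such that |X| − |N_{H−Ẽ}(X)| = 2 (so necessarily |X| = k+1 and |N_{H−Ẽ}(X)| = k−1). Let H' be another bipartite graph on the same parts with minimum degree at least k−1, formed from H by adding two matchings and removing two matchings. If H' contains a matching of size 2 from X to B \ N_{H−Ẽ}(X), then H' has a perfect matching. -/

import Mathlib

/-- A set of pairs (edges of `K_{n,n}`, with first coordinate in part `A` and
second in part `B`) is a matching if no two of its edges share an endpoint. -/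
def IsMatchingSet {n : ℕ} (M : Finset (Fin n × Fin n)) : Prop :=
  ∀ p ∈ M, ∀ q ∈ M, (p.1 = q.1 ∨ p.2 = q.2) → p = q

/-- The edge set of the bigraph encoded by the neighborhood function `N`. -/
def edgeFinset' {n : ℕ} (N : Fin n → Finset (Fin n)) : Finset (Fin n × Fin n) :=
  Finset.univ.filter (fun p => p.2 ∈ N p.1)

/-- The neighborhood of `X ⊆ A` in the graph `N` with the edges of `E` deleted. -/
def nbhdMinus {n : ℕ} (N : Fin n → Finset (Fin n))
    (E : Finset (Fin n × Fin n)) (X : Finset (Fin n)) : Finset (Fin n) :=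
  X.biUnion (fun x => (N x).filter (fun y => (x, y) ∉ E))

open Finset

namespace Stmt12Aux

variable {n : ℕ}

lemma matching_fst {M : Finset (Fin n × Fin n)} (hM : IsMatchingSet M) {x₁ x₂ y : Fin n}
    (h₁ : (x₁, y) ∈ M) (h₂ : (x₂, y) ∈ M) : x₁ = x₂ :=
  congrArg Prod.fst (hM _ h₁ _ h₂ (Or.inr rfl))

lemma matching_snd {M : Finset (Fin n × Fin n)} (hM : IsMatchingSet M) {x y₁ y₂ : Fin n}
    (h₁ : (x, y₁) ∈ M) (h₂ : (x, y₂) ∈ M) : y₁ = y₂ :=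
  congrArg Prod.snd (hM _ h₁ _ h₂ (Or.inl rfl))

/-- A-side partners of `y` in `M`. -/
def pA (M : Finset (Fin n × Fin n)) (y : Fin n) : Finset (Fin n) :=
  (M.filter (fun p => p.2 = y)).image Prod.fst

/-- B-side partners of `x` in `M`. -/
def pB (M : Finset (Fin n × Fin n)) (x : Fin n) : Finset (Fin n) :=
  (M.filter (fun p => p.1 = x)).image Prod.snd

lemma mem_pA {M : Finset (Fin n × Fin n)} {x y : Fin n} (h : (x, y) ∈ M) : x ∈ pA M y := by
  simp only [pA, mem_image]
  exact ⟨(x, y), mem_filter.mpr ⟨h, rfl⟩, rfl⟩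

lemma mem_pB {M : Finset (Fin n × Fin n)} {x y : Fin n} (h : (x, y) ∈ M) : y ∈ pB M x := by
  simp only [pB, mem_image]
  exact ⟨(x, y), mem_filter.mpr ⟨h, rfl⟩, rfl⟩

lemma card_pA {M : Finset (Fin n × Fin n)} (hM : IsMatchingSet M) (y : Fin n) :
    (pA M y).card ≤ 1 := by
  refine le_trans card_image_le (card_le_one.2 ?_)
  intro p hp q hq
  rw [mem_filter] at hp hq
  exact hM p hp.1 q hq.1 (Or.inr (hp.2.trans hq.2.symm))

lemma card_pB {M : Finset (Fin n × Fin n)} (hM : IsMatchingSet M) (x : Fin n) :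
    (pB M x).card ≤ 1 := by
  refine le_trans card_image_le (card_le_one.2 ?_)
  intro p hp q hq
  rw [mem_filter] at hp hq
  exact hM p hp.1 q hq.1 (Or.inl (hp.2.trans hq.2.symm))

lemma exists_nonincidentA {E : Finset (Fin n × Fin n)} (hE : E.card ≤ 1)
    {s : Finset (Fin n)} (hs : 2 ≤ s.card) : ∃ x ∈ s, ∀ y, (x, y) ∉ E := by
  have hs' : 1 < s.card := by omega
  obtain ⟨x₁, x₂, hx₁, hx₂, hne⟩ := one_lt_card_iff.mp hs'
  by_cases h₁ : ∀ y, (x₁, y) ∉ E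
  · exact ⟨x₁, hx₁, h₁⟩
  by_cases h₂ : ∀ y, (x₂, y) ∉ E
  · exact ⟨x₂, hx₂, h₂⟩
  push_neg at h₁ h₂
  obtain ⟨z₁, hz₁⟩ := h₁
  obtain ⟨z₂, hz₂⟩ := h₂
  exact absurd (congrArg Prod.fst (card_le_one.mp hE _ hz₁ _ hz₂)) hne

lemma exists_nonincidentB {E : Finset (Fin n × Fin n)} (hE : E.card ≤ 1)
    {s : Finset (Fin n)} (hs : 2 ≤ s.card) : ∃ y ∈ s, ∀ x, (x, y) ∉ E := by
  have hs' : 1 < s.card := by omega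
  obtain ⟨y₁, y₂, hy₁, hy₂, hne⟩ := one_lt_card_iff.mp hs'
  by_cases h₁ : ∀ x, (x, y₁) ∉ E
  · exact ⟨y₁, hy₁, h₁⟩
  by_cases h₂ : ∀ x, (x, y₂) ∉ E
  · exact ⟨y₂, hy₂, h₂⟩
  push_neg at h₁ h₂
  obtain ⟨z₁, hz₁⟩ := h₁
  obtain ⟨z₂, hz₂⟩ := h₂
  exact absurd (congrArg Prod.snd (card_le_one.mp hE _ hz₁ _ hz₂)) hne

lemma swap_matching {M : Finset (Fin n × Fin n)} (hM : IsMatchingSet M) :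
    IsMatchingSet (M.map ⟨Prod.swap, Prod.swap_injective⟩) := by
  intro p hp q hq h
  rw [mem_map] at hp hq
  obtain ⟨a, ha, rfl⟩ := hp
  obtain ⟨b, hb, rfl⟩ := hq
  have hab : a = b := by
    apply hM a ha b hb
    rcases h with h | h
    · exact Or.inr h
    · exact Or.inl h
  subst hab
  rfl


lemma key (k : ℕ) (hk : 4 ≤ k)
    (N N' : Fin (2*k) → Finset (Fin (2*k)))
    (hA : ∀ x, k - 1 ≤ (N x).card)
    (hB : ∀ y, k - 1 ≤ (univ.filter (fun x => y ∈ N x)).card)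
    (hA' : ∀ x, k - 1 ≤ (N' x).card)
    (hB' : ∀ y, k - 1 ≤ (univ.filter (fun x => y ∈ N' x)).card)
    (X Y : Finset (Fin (2*k)))
    (hX : X.card = k + 1) (hY : Y.card = k - 1)
    (E : Finset (Fin (2*k) × Fin (2*k)))
    (hE1 : E.card ≤ 1)
    (hNX : ∀ x ∈ X, ∀ y ∈ N x, (x, y) ∉ E → y ∈ Y)
    (M₁ M₂ M₃ M₄ : Finset (Fin (2*k) × Fin (2*k)))
    (hM₁ : IsMatchingSet M₁) (hM₂ : IsMatchingSet M₂)
    (hM₃ : IsMatchingSet M₃) (hM₄ : IsMatchingSet M₄)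
    (hH' : ∀ x y, y ∈ N' x ↔
      ((y ∈ N x ∨ (x, y) ∈ M₁ ∨ (x, y) ∈ M₂) ∧ ¬((x, y) ∈ M₃ ∨ (x, y) ∈ M₄)))
    (x₁ x₂ y₁ y₂ : Fin (2*k))
    (hx₁ : x₁ ∈ X) (hx₂ : x₂ ∈ X) (hx12 : x₁ ≠ x₂)
    (hy₁ : y₁ ∉ Y) (hy₂ : y₂ ∉ Y) (hy12 : y₁ ≠ y₂)
    (hxy₁ : y₁ ∈ N' x₁) (hxy₂ : y₂ ∈ N' x₂)
    (P Q : Finset (Fin (2*k)))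
    (hP : P.card = k + 1) (hQ : Q.card = k)
    (hPQ : ∀ x ∈ P, ∀ y ∈ Q, y ∉ N' x) : False := by
  have hn : (univ : Finset (Fin (2*k))).card = 2*k := by simp
  -- C4 : non E-incident vertices of X have neighborhood exactly Y
  have hC4 : ∀ x ∈ X, (∀ y, (x, y) ∉ E) → N x = Y := by
    intro x hx hxE
    have hsub : N x ⊆ Y := fun y hy => hNX x hx y hy (hxE y)
    refine eq_of_subset_of_card_le hsub ?_
    have := hA x
    omega
  -- C1 : H' is complete between (univ \ P) and Q
  have hC1 : ∀ y ∈ Q, ∀ x, x ∉ P → y ∈ N' x := by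
    intro y hy x hx
    have hsub : univ.filter (fun x => y ∈ N' x) ⊆ univ \ P := by
      intro z hz
      rw [mem_filter] at hz
      exact mem_sdiff.mpr ⟨mem_univ z, fun hzP => hPQ z hzP y hy hz.2⟩
    have hcards : (univ \ P).card = k - 1 := by
      rw [card_sdiff_of_subset (subset_univ _), hn, hP]
      omega
    have heq : univ.filter (fun x => y ∈ N' x) = univ \ P := by
      refine eq_of_subset_of_card_le hsub ?_
      rw [hcards]
      exact hB' y
    have hx' : x ∈ univ \ P := mem_sdiff.mpr ⟨mem_univ x, hx⟩
    rw [← heq, mem_filter] at hx'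
    exact hx'.2
  -- C3 : H-edges from P to Q that vanished in H' belong to M₃ ∪ M₄
  have hC3 : ∀ x ∈ P, ∀ q ∈ Q, q ∈ N x → (x, q) ∈ M₃ ∨ (x, q) ∈ M₄ := by
    intro x hxP q hqQ hqN
    have hnotN' : q ∉ N' x := hPQ x hxP q hqQ
    by_contra hcon
    push_neg at hcon
    exact hnotN' ((hH' x q).2 ⟨Or.inl hqN, by tauto⟩)
  have hPXcard : 2 ≤ (P ∩ X).card := by
    have h1 := card_inter_add_card_union P X
    have h2 : (P ∪ X).card ≤ 2*k := by
      exact le_trans (card_le_card (subset_univ _)) (le_of_eq hn)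
    omega
  by_cases hcase : ∃ y ∈ Q, y ∉ Y ∧ ∀ x, (x, y) ∉ E
  · -- case ii
    obtain ⟨y₀, hy₀Q, hy₀Y, hy₀E⟩ := hcase
    have hXPsub : X \ P ⊆ pA M₁ y₀ ∪ pA M₂ y₀ := by
      intro x hx
      rw [mem_sdiff] at hx
      have hN' : y₀ ∈ N' x := hC1 y₀ hy₀Q x hx.2
      rcases (hH' x y₀).1 hN' with ⟨h | h | h, -⟩
      · exact absurd (hNX x hx.1 y₀ h (hy₀E x)) hy₀Y
      · exact mem_union_left _ (mem_pA h)
      · exact mem_union_right _ (mem_pA h)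
    have hXP2 : (X \ P).card ≤ 2 := by
      have h1 := card_le_card hXPsub
      have h2 := card_union_le (pA M₁ y₀) (pA M₂ y₀)
      have h3 := card_pA hM₁ y₀
      have h4 := card_pA hM₂ y₀
      omega
    have hPX3 : k - 1 ≤ (P ∩ X).card := by
      have h1 : (X ∩ P).card + (X \ P).card = X.card := card_inter_add_card_sdiff X P
      rw [inter_comm] at h1
      omega
    by_cases hQY : (Q ∩ Y).Nonempty
    · -- case ii-c
      obtain ⟨q₀, hq₀⟩ := hQY
      rw [mem_inter] at hq₀
      have hkey : ∀ x ∈ P ∩ X, (∀ y, (x, y) ∉ E) → x ∈ pA M₃ q₀ ∪ pA M₄ q₀ := by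
        intro x hx hxE
        rw [mem_inter] at hx
        have hNx : q₀ ∈ N x := by
          rw [hC4 x hx.2 hxE]; exact hq₀.2
        rcases hC3 x hx.1 q₀ hq₀.1 hNx with h | h
        · exact mem_union_left _ (mem_pA h)
        · exact mem_union_right _ (mem_pA h)
      have hEex : ∃ p ∈ E, p.1 ∈ P ∩ X := by
        by_contra hcon
        push_neg at hcon
        have hsub : P ∩ X ⊆ pA M₃ q₀ ∪ pA M₄ q₀ := by
          intro x hx
          refine hkey x hx (fun y hE => ?_)
          exact absurd hx (by simpa using hcon (x, y) hE)
        have h1 := card_le_card hsub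
        have h2 := card_union_le (pA M₃ q₀) (pA M₄ q₀)
        have h3 := card_pA hM₃ q₀
        have h4 := card_pA hM₄ q₀
        omega
      obtain ⟨⟨a, b⟩, habE, haPX⟩ := hEex
      have hEeq : ∀ p ∈ E, p = (a, b) := fun p hp => card_le_one.mp hE1 p hp _ habE
      have hPXsub2 : P ∩ X ⊆ insert a (pA M₃ q₀ ∪ pA M₄ q₀) := by
        intro x hx
        by_cases hxa : x = a
        · exact mem_insert.2 (Or.inl hxa)
        · refine mem_insert.2 (Or.inr (hkey x hx (fun y hyE => ?_)))
          exact hxa (congrArg Prod.fst (hEeq (x, y) hyE))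
      have hPXle : (P ∩ X).card ≤ 3 := by
        have h1 := card_le_card hPXsub2
        have h2 := card_insert_le a (pA M₃ q₀ ∪ pA M₄ q₀)
        have h3 := card_union_le (pA M₃ q₀) (pA M₄ q₀)
        have h4 := card_pA hM₃ q₀
        have h5 := card_pA hM₄ q₀
        omega
      have hk4 : k = 4 := by omega
      have hPX3' : (P ∩ X).card = 3 := by omega
      have hcard2 : 1 < ((P ∩ X).erase a).card := by
        rw [card_erase_of_mem haPX, hPX3']
        omega
      obtain ⟨p₁, p₂, hp₁, hp₂, hp12⟩ := one_lt_card_iff.mp hcard2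
      rw [mem_erase, mem_inter] at hp₁ hp₂
      have hp₁E : ∀ y, (p₁, y) ∉ E := fun y hyE =>
        hp₁.1 (congrArg Prod.fst (hEeq (p₁, y) hyE))
      have hp₂E : ∀ y, (p₂, y) ∉ E := fun y hyE =>
        hp₂.1 (congrArg Prod.fst (hEeq (p₂, y) hyE))
      -- there is x' ∈ X \ P, necessarily ≠ a, non-incident
      have hXPne : (X \ P).Nonempty := by
        rw [← card_pos]
        have h1 : (X ∩ P).card + (X \ P).card = X.card := card_inter_add_card_sdiff X P
        rw [inter_comm] at h1
        omega
      obtain ⟨x', hx'⟩ := hXPne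
      rw [mem_sdiff] at hx'
      have hx'a : x' ≠ a := fun h => hx'.2 (h ▸ (mem_inter.mp haPX).1)
      have hx'E : ∀ y, (x', y) ∉ E := fun y hyE =>
        hx'a (congrArg Prod.fst (hEeq (x', y) hyE))
      have hQYsub : Q \ Y ⊆ pB M₁ x' ∪ pB M₂ x' := by
        intro y hy
        rw [mem_sdiff] at hy
        have hN' : y ∈ N' x' := hC1 y hy.1 x' hx'.2
        rcases (hH' x' y).1 hN' with ⟨h | h | h, -⟩
        · exact absurd (hNX x' hx'.1 y h (hx'E y)) hy.2
        · exact mem_union_left _ (mem_pB h)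
        · exact mem_union_right _ (mem_pB h)
      have hQY2 : 1 < (Q ∩ Y).card := by
        have h1 : (Q ∩ Y).card + (Q \ Y).card = Q.card := card_inter_add_card_sdiff Q Y
        have h2 := card_le_card hQYsub
        have h3 := card_union_le (pB M₁ x') (pB M₂ x')
        have h4 := card_pB hM₁ x'
        have h5 := card_pB hM₂ x'
        omega
      obtain ⟨q₁, q₂, hq₁, hq₂, hq12⟩ := one_lt_card_iff.mp hQY2
      -- no q ∈ Q ∩ Y is a neighbor of a
      have haP : a ∈ P := (mem_inter.mp haPX).1
      have haX : a ∈ X := (mem_inter.mp haPX).2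
      have hqa : ∀ q ∈ Q ∩ Y, q ∉ N a := by
        intro q hq hqNa
        rw [mem_inter] at hq
        have h1 : (p₁, q) ∈ M₃ ∨ (p₁, q) ∈ M₄ :=
          hC3 p₁ hp₁.2.1 q hq.1 (by rw [hC4 p₁ hp₁.2.2 hp₁E]; exact hq.2)
        have h2 : (p₂, q) ∈ M₃ ∨ (p₂, q) ∈ M₄ :=
          hC3 p₂ hp₂.2.1 q hq.1 (by rw [hC4 p₂ hp₂.2.2 hp₂E]; exact hq.2)
        have h3 : (a, q) ∈ M₃ ∨ (a, q) ∈ M₄ := hC3 a haP q hq.1 hqNa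
        rcases h1 with h1 | h1 <;> rcases h2 with h2 | h2 <;> rcases h3 with h3 | h3 <;>
          first
            | exact hp12 (matching_fst hM₃ h1 h2)
            | exact hp12 (matching_fst hM₄ h1 h2)
            | exact hp₁.1 (matching_fst hM₃ h1 h3)
            | exact hp₁.1 (matching_fst hM₄ h1 h3)
            | exact hp₂.1 (matching_fst hM₃ h2 h3)
            | exact hp₂.1 (matching_fst hM₄ h2 h3)
      -- final cardinality contradiction on N a
      have hNa : N a ⊆ (insert b Y) \ {q₁, q₂} := by
        intro y hy
        rw [mem_sdiff]
        constructor
        · by_cases hyE : (a, y) ∈ E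
          · exact mem_insert.2 (Or.inl (congrArg Prod.snd (hEeq (a, y) hyE)))
          · exact mem_insert_of_mem (hNX a haX y hy hyE)
        · intro hmem
          rw [mem_insert, mem_singleton] at hmem
          rcases hmem with rfl | rfl
          · exact hqa y hq₁ hy
          · exact hqa y hq₂ hy
      have h1 := card_le_card hNa
      have h2 : ((insert b Y) \ {q₁, q₂}).card + ({q₁, q₂} : Finset _).card
          = (insert b Y).card := by
        refine card_sdiff_add_card_eq_card ?_
        intro z hz
        rw [mem_insert, mem_singleton] at hz
        rcases hz with rfl | rfl
        · exact mem_insert_of_mem (mem_inter.mp hq₁).2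
        · exact mem_insert_of_mem (mem_inter.mp hq₂).2
      have h3 : ({q₁, q₂} : Finset _).card = 2 := card_pair hq12
      have h4 : (insert b Y).card ≤ k := by
        have := card_insert_le b Y
        omega
      have h5 := hA a
      omega
    · -- case ii-b : Q ∩ Y = ∅
      rw [not_nonempty_iff_eq_empty] at hQY
      have hQnotY : ∀ y ∈ Q, y ∉ Y := by
        intro y hy hyY
        have : y ∈ Q ∩ Y := mem_inter.mpr ⟨hy, hyY⟩
        rw [hQY] at this
        simp at this
      by_cases hXP : X ⊆ P
      · have hPX : X = P := eq_of_subset_of_card_le hXP (by omega)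
        have hy₁Q : y₁ ∉ Q := fun h => hPQ x₁ (hPX ▸ hx₁) y₁ h hxy₁
        have hy₂Q : y₂ ∉ Q := fun h => hPQ x₂ (hPX ▸ hx₂) y₂ h hxy₂
        have hdisj : Disjoint Q Y := disjoint_left.mpr hQnotY
        have hQYcard : (Q ∪ Y).card = 2*k - 1 := by
          rw [card_union_of_disjoint hdisj, hQ, hY]
          omega
        have hcompl : (univ \ (Q ∪ Y)).card ≤ 1 := by
          rw [card_sdiff_of_subset (subset_univ _), hn, hQYcard]
          omega
        have hy₁m : y₁ ∈ univ \ (Q ∪ Y) := by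
          rw [mem_sdiff, mem_union]
          exact ⟨mem_univ _, by tauto⟩
        have hy₂m : y₂ ∈ univ \ (Q ∪ Y) := by
          rw [mem_sdiff, mem_union]
          exact ⟨mem_univ _, by tauto⟩
        exact hy12 (card_le_one.mp hcompl _ hy₁m _ hy₂m)
      · have hXPne : (X \ P).Nonempty := by
          rw [sdiff_nonempty]
          exact hXP
        obtain ⟨x', hx'⟩ := hXPne
        rw [mem_sdiff] at hx'
        -- any non-incident x ∉ P in X gives a contradiction
        have hnonE : ∀ x ∈ X, x ∉ P → (∀ y, (x, y) ∉ E) → False := by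
          intro x hxX hxP hxE
          have hsub : Q ⊆ pB M₁ x ∪ pB M₂ x := by
            intro y hy
            have hN' : y ∈ N' x := hC1 y hy x hxP
            rcases (hH' x y).1 hN' with ⟨h | h | h, -⟩
            · exact absurd (hNX x hxX y h (hxE y)) (hQnotY y hy)
            · exact mem_union_left _ (mem_pB h)
            · exact mem_union_right _ (mem_pB h)
          have h1 := card_le_card hsub
          have h2 := card_union_le (pB M₁ x) (pB M₂ x)
          have h3 := card_pB hM₁ x
          have h4 := card_pB hM₂ x
          omega
        by_cases hx'E : ∀ y, (x', y) ∉ E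
        · exact hnonE x' hx'.1 hx'.2 hx'E
        · push_neg at hx'E
          obtain ⟨b', hb'⟩ := hx'E
          have hEeq : ∀ p ∈ E, p = (x', b') := fun p hp => card_le_one.mp hE1 p hp _ hb'
          have hXPsub' : X \ P ⊆ {x'} := by
            intro x hx
            rw [mem_singleton]
            by_contra hxx
            rw [mem_sdiff] at hx
            refine hnonE x hx.1 hx.2 (fun y hyE => ?_)
            exact hxx (congrArg Prod.fst (hEeq (x, y) hyE))
          have hXPcard1 : (X \ P).card = 1 := by
            have h1 := card_le_card hXPsub'
            have h2 := card_singleton x'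
            have h3 : 0 < (X \ P).card := card_pos.mpr ⟨x', mem_sdiff.mpr hx'⟩
            omega
          have hPXne : (P \ X).Nonempty := by
            rw [← card_pos]
            have h1 : (X ∩ P).card + (X \ P).card = X.card := card_inter_add_card_sdiff X P
            have h2 : (P ∩ X).card + (P \ X).card = P.card := card_inter_add_card_sdiff P X
            rw [inter_comm] at h1
            omega
          obtain ⟨w, hw⟩ := hPXne
          rw [mem_sdiff] at hw
          have hQsub : Q ⊆ insert b' (pB M₃ w ∪ pB M₄ w) := by
            intro y hy
            by_cases hyb : y = b'
            · exact mem_insert.2 (Or.inl hyb)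
            · have hyE : ∀ x, (x, y) ∉ E := fun x hxy =>
                hyb (congrArg Prod.snd (hEeq (x, y) hxy))
              have hNw : y ∈ N w := by
                have hsub : univ.filter (fun x => y ∈ N x) ⊆ univ \ X := by
                  intro z hz
                  rw [mem_filter] at hz
                  exact mem_sdiff.mpr ⟨mem_univ z,
                    fun hzX => (hQnotY y hy) (hNX z hzX y hz.2 (hyE z))⟩
                have heq : univ.filter (fun x => y ∈ N x) = univ \ X := by
                  refine eq_of_subset_of_card_le hsub ?_
                  rw [card_sdiff_of_subset (subset_univ _), hn, hX]
                  have := hB y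
                  omega
                have hw' : w ∈ univ \ X := mem_sdiff.mpr ⟨mem_univ w, hw.2⟩
                rw [← heq, mem_filter] at hw'
                exact hw'.2
              rcases hC3 w hw.1 y hy hNw with h | h
              · exact mem_insert_of_mem (mem_union_left _ (mem_pB h))
              · exact mem_insert_of_mem (mem_union_right _ (mem_pB h))
          have h1 := card_le_card hQsub
          have h2 := card_insert_le b' (pB M₃ w ∪ pB M₄ w)
          have h3 := card_union_le (pB M₃ w) (pB M₄ w)
          have h4 := card_pB hM₃ w
          have h5 := card_pB hM₄ w
          omega
  · -- case i : every y ∈ Q \ Y is E-incident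
    push_neg at hcase
    have hQYsub : Q \ Y ⊆ E.image Prod.snd := by
      intro y hy
      rw [mem_sdiff] at hy
      obtain ⟨x, hx⟩ := hcase y hy.1 hy.2
      rw [mem_image]
      exact ⟨(x, y), hx, rfl⟩
    have hQY1 : (Q \ Y).card ≤ 1 := by
      have h1 := card_le_card hQYsub
      have h2 := card_image_le (s := E) (f := Prod.snd)
      omega
    have hYQ : Y ⊆ Q := by
      have h1 : (Q ∩ Y).card + (Q \ Y).card = Q.card := card_inter_add_card_sdiff Q Y
      have heq : Q ∩ Y = Y := eq_of_subset_of_card_le inter_subset_right (by omega)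
      rw [← heq]
      exact inter_subset_left
    obtain ⟨u, huPX, huE⟩ := exists_nonincidentA hE1 hPXcard
    rw [mem_inter] at huPX
    have hNu : N u = Y := hC4 u huPX.2 huE
    have hsub : N' u ⊆ pB M₁ u ∪ pB M₂ u := by
      intro y hy
      rcases (hH' u y).1 hy with ⟨h | h | h, -⟩
      · exact absurd hy (hPQ u huPX.1 y (hYQ (hNu ▸ h)))
      · exact mem_union_left _ (mem_pB h)
      · exact mem_union_right _ (mem_pB h)
    have h1 := card_le_card hsub
    have h2 := card_union_le (pB M₁ u) (pB M₂ u)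
    have h3 := card_pB hM₁ u
    have h4 := card_pB hM₂ u
    have h5 := hA' u
    omega

end Stmt12Aux

open Stmt12Aux in
theorem stmt12 (k : ℕ) (hk : 4 ≤ k)
    (N N' : Fin (2 * k) → Finset (Fin (2 * k)))
    (hA : ∀ x, k - 1 ≤ (N x).card)
    (hB : ∀ y : Fin (2 * k), k - 1 ≤ (Finset.univ.filter (fun x => y ∈ N x)).card)
    (hA' : ∀ x, k - 1 ≤ (N' x).card)
    (hB' : ∀ y : Fin (2 * k), k - 1 ≤ (Finset.univ.filter (fun x => y ∈ N' x)).card)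
    (X : Finset (Fin (2 * k)))
    (E : Finset (Fin (2 * k) × Fin (2 * k)))
    (hEcard : E.card ≤ 1) (hEsub : E ⊆ edgeFinset' N)
    (hdef : X.card = (nbhdMinus N E X).card + 2)
    (M₁ M₂ M₃ M₄ : Finset (Fin (2 * k) × Fin (2 * k)))
    (hM₁ : IsMatchingSet M₁) (hM₂ : IsMatchingSet M₂)
    (hM₃ : IsMatchingSet M₃) (hM₄ : IsMatchingSet M₄)
    (hH' : edgeFinset' N' = (edgeFinset' N ∪ M₁ ∪ M₂) \ (M₃ ∪ M₄))
    (hmatch : ∃ x₁ x₂ y₁ y₂ : Fin (2 * k), x₁ ∈ X ∧ x₂ ∈ X ∧ x₁ ≠ x₂ ∧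
      y₁ ∉ nbhdMinus N E X ∧ y₂ ∉ nbhdMinus N E X ∧ y₁ ≠ y₂ ∧
      y₁ ∈ N' x₁ ∧ y₂ ∈ N' x₂) :
    ∃ f : Fin (2 * k) ≃ Fin (2 * k), ∀ x, f x ∈ N' x := by
  classical
  set Y := nbhdMinus N E X with hYdef
  have hn : (univ : Finset (Fin (2 * k))).card = 2 * k := by simp
  have hYmem : ∀ x ∈ X, ∀ y ∈ N x, (x, y) ∉ E → y ∈ Y := by
    intro x hx y hy hE
    rw [hYdef, nbhdMinus]
    exact mem_biUnion.mpr ⟨x, hx, mem_filter.mpr ⟨hy, hE⟩⟩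
  -- Step 0 : |X| = k+1, |Y| = k-1
  have hX2k : X.card ≤ 2 * k := le_trans (card_le_card (subset_univ _)) (le_of_eq hn)
  have hXge2 : 2 ≤ X.card := by omega
  obtain ⟨x₀, hx₀X, hx₀E⟩ := exists_nonincidentA hEcard hXge2
  have hNx₀ : N x₀ ⊆ Y := fun y hy => hYmem x₀ hx₀X y hy (hx₀E y)
  have h1 : k - 1 ≤ Y.card := le_trans (hA x₀) (card_le_card hNx₀)
  have hcompl2 : 2 ≤ (univ \ Y).card := by
    rw [card_sdiff_of_subset (subset_univ _), hn]
    omega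
  obtain ⟨y₀, hy₀, hy₀E⟩ := exists_nonincidentB hEcard hcompl2
  have hy₀Y : y₀ ∉ Y := (mem_sdiff.mp hy₀).2
  have hin : univ.filter (fun x => y₀ ∈ N x) ⊆ univ \ X := by
    intro z hz
    rw [mem_filter] at hz
    exact mem_sdiff.mpr ⟨mem_univ z, fun hzX => hy₀Y (hYmem z hzX y₀ hz.2 (hy₀E z))⟩
  have h2 : k - 1 ≤ 2 * k - X.card := by
    have := le_trans (hB y₀) (card_le_card hin)
    rw [card_sdiff_of_subset (subset_univ _), hn] at this
    exact this
  have hX : X.card = k + 1 := by omega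
  have hY : Y.card = k - 1 := by omega
  -- membership form of hH'
  have hH'iff : ∀ x y, y ∈ N' x ↔
      ((y ∈ N x ∨ (x, y) ∈ M₁ ∨ (x, y) ∈ M₂) ∧ ¬((x, y) ∈ M₃ ∨ (x, y) ∈ M₄)) := by
    intro x y
    have h1 : (x, y) ∈ edgeFinset' N' ↔
        (x, y) ∈ (edgeFinset' N ∪ M₁ ∪ M₂) \ (M₃ ∪ M₄) := by rw [hH']
    simpa [edgeFinset', Finset.mem_sdiff, Finset.mem_union, Finset.mem_filter,
      or_assoc] using h1
  obtain ⟨x₁, x₂, y₁, y₂, hx₁, hx₂, hx12, hy₁, hy₂, hy12, hxy₁, hxy₂⟩ := hmatch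
  -- reversed data
  set Nr : Fin (2 * k) → Finset (Fin (2 * k)) :=
    fun y => univ.filter (fun x => y ∈ N x) with hNr
  set N'r : Fin (2 * k) → Finset (Fin (2 * k)) :=
    fun y => univ.filter (fun x => y ∈ N' x) with hN'r
  have hmemNr : ∀ y x, x ∈ Nr y ↔ y ∈ N x := by
    intro y x; rw [hNr]; simp
  have hmemN'r : ∀ y x, x ∈ N'r y ↔ y ∈ N' x := by
    intro y x; rw [hN'r]; simp
  have hBr : ∀ x, k - 1 ≤ (univ.filter (fun y => x ∈ Nr y)).card := by
    intro x
    have : univ.filter (fun y => x ∈ Nr y) = N x := by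
      ext y; simp [hmemNr]
    rw [this]
    exact hA x
  have hB'r : ∀ x, k - 1 ≤ (univ.filter (fun y => x ∈ N'r y)).card := by
    intro x
    have : univ.filter (fun y => x ∈ N'r y) = N' x := by
      ext y; simp [hmemN'r]
    rw [this]
    exact hA' x
  set Er : Finset (Fin (2 * k) × Fin (2 * k)) :=
    E.map ⟨Prod.swap, Prod.swap_injective⟩ with hEr
  have hmemEr : ∀ y x, (y, x) ∈ Er ↔ (x, y) ∈ E := by
    intro y x
    rw [hEr, mem_map]
    constructor
    · rintro ⟨⟨a, b⟩, hab, h⟩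
      obtain ⟨rfl, rfl⟩ : b = y ∧ a = x := by
        constructor <;> [exact congrArg Prod.fst h; exact congrArg Prod.snd h]
      exact hab
    · intro h
      exact ⟨(x, y), h, rfl⟩
  have hErcard : Er.card ≤ 1 := by rw [hEr, card_map]; exact hEcard
  have hNXr : ∀ y ∈ univ \ Y, ∀ x ∈ Nr y, (y, x) ∉ Er → x ∈ univ \ X := by
    intro y hy x hx hE
    rw [mem_sdiff] at hy
    rw [hmemNr] at hx
    rw [hmemEr] at hE
    exact mem_sdiff.mpr ⟨mem_univ x, fun hxX => hy.2 (hYmem x hxX y hx hE)⟩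
  have hXr : (univ \ Y).card = k + 1 := by
    rw [card_sdiff_of_subset (subset_univ _), hn, hY]; omega
  have hYr : (univ \ X).card = k - 1 := by
    rw [card_sdiff_of_subset (subset_univ _), hn, hX]; omega
  set M₁r := M₁.map ⟨Prod.swap, Prod.swap_injective⟩ with hM₁r
  set M₂r := M₂.map ⟨Prod.swap, Prod.swap_injective⟩ with hM₂r
  set M₃r := M₃.map ⟨Prod.swap, Prod.swap_injective⟩ with hM₃r
  set M₄r := M₄.map ⟨Prod.swap, Prod.swap_injective⟩ with hM₄r
  have hmemMr : ∀ (M : Finset (Fin (2 * k) × Fin (2 * k))) (y x : Fin (2 * k)),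
      (y, x) ∈ M.map ⟨Prod.swap, Prod.swap_injective⟩ ↔ (x, y) ∈ M := by
    intro M y x
    rw [mem_map]
    constructor
    · rintro ⟨⟨a, b⟩, hab, h⟩
      obtain ⟨rfl, rfl⟩ : b = y ∧ a = x := by
        constructor <;> [exact congrArg Prod.fst h; exact congrArg Prod.snd h]
      exact hab
    · intro h
      exact ⟨(x, y), h, rfl⟩
  have hH'r : ∀ y x, x ∈ N'r y ↔
      ((x ∈ Nr y ∨ (y, x) ∈ M₁r ∨ (y, x) ∈ M₂r) ∧ ¬((y, x) ∈ M₃r ∨ (y, x) ∈ M₄r)) := by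
    intro y x
    rw [hmemN'r, hmemNr, hM₁r, hM₂r, hM₃r, hM₄r, hmemMr, hmemMr, hmemMr, hmemMr]
    exact hH'iff x y
  -- Hall's condition
  have hall : ∀ S : Finset (Fin (2 * k)), S.card ≤ (S.biUnion N').card := by
    intro S
    by_contra hcon
    push_neg at hcon
    have hSne : S.Nonempty := by
      rcases S.eq_empty_or_nonempty with h | h
      · rw [h] at hcon; simp at hcon
      · exact h
    obtain ⟨z₀, hz₀⟩ := hSne
    have hT : k - 1 ≤ (S.biUnion N').card :=
      le_trans (hA' z₀) (card_le_card (fun y hy => mem_biUnion.mpr ⟨z₀, hz₀, hy⟩))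
    have hS2k : S.card ≤ 2 * k := le_trans (card_le_card (subset_univ _)) (le_of_eq hn)
    have hcompl : (univ \ S.biUnion N').Nonempty := by
      rw [← card_pos, card_sdiff_of_subset (subset_univ _), hn]
      omega
    obtain ⟨yy, hyy⟩ := hcompl
    have hyyT : yy ∉ S.biUnion N' := (mem_sdiff.mp hyy).2
    have hinS : univ.filter (fun x => yy ∈ N' x) ⊆ univ \ S := by
      intro z hz
      rw [mem_filter] at hz
      exact mem_sdiff.mpr ⟨mem_univ z, fun hzS => hyyT (mem_biUnion.mpr ⟨z, hzS, hz.2⟩)⟩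
    have hSle : S.card ≤ k + 1 := by
      have h3 := le_trans (hB' yy) (card_le_card hinS)
      rw [card_sdiff_of_subset (subset_univ _), hn] at h3
      omega
    have hTub : (S.biUnion N').card < S.card := hcon
    rcases (by omega : S.card = k + 1 ∨ S.card = k) with hScard | hScard
    · -- forward orientation: P := S
      have hQex : ∃ Q ⊆ univ \ S.biUnion N', Q.card = k := by
        apply exists_subset_card_eq
        rw [card_sdiff_of_subset (subset_univ _), hn]
        omega
      obtain ⟨Q, hQsub, hQcard⟩ := hQex
      refine key k hk N N' hA hB hA' hB' X Y hX hY E hEcard hYmem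
        M₁ M₂ M₃ M₄ hM₁ hM₂ hM₃ hM₄ hH'iff
        x₁ x₂ y₁ y₂ hx₁ hx₂ hx12 hy₁ hy₂ hy12 hxy₁ hxy₂
        S Q hScard hQcard ?_
      intro x hxS y hyQ hyN'
      exact (mem_sdiff.mp (hQsub hyQ)).2 (mem_biUnion.mpr ⟨x, hxS, hyN'⟩)
    · -- reversed orientation
      have hTcard : (S.biUnion N').card = k - 1 := by omega
      have hPr : (univ \ S.biUnion N').card = k + 1 := by
        rw [card_sdiff_of_subset (subset_univ _), hn, hTcard]
        omega
      refine key k hk Nr N'r hB hBr hB' hB'r (univ \ Y) (univ \ X) hXr hYr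
        Er hErcard hNXr M₁r M₂r M₃r M₄r
        (hM₁r ▸ swap_matching hM₁) (hM₂r ▸ swap_matching hM₂)
        (hM₃r ▸ swap_matching hM₃) (hM₄r ▸ swap_matching hM₄) hH'r
        y₁ y₂ x₁ x₂ (mem_sdiff.mpr ⟨mem_univ _, hy₁⟩) (mem_sdiff.mpr ⟨mem_univ _, hy₂⟩)
        hy12 (fun h => (mem_sdiff.mp h).2 hx₁) (fun h => (mem_sdiff.mp h).2 hx₂) hx12
        ((hmemN'r y₁ x₁).mpr hxy₁) ((hmemN'r y₂ x₂).mpr hxy₂)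
        (univ \ S.biUnion N') S hPr hScard ?_
      intro y hyP x hxS hxN'
      rw [hmemN'r] at hxN'
      exact (mem_sdiff.mp hyP).2 (mem_biUnion.mpr ⟨x, hxS, hxN'⟩)
  obtain ⟨f, hfinj, hf⟩ := (Finset.all_card_le_biUnion_card_iff_exists_injective N').mp hall
  exact ⟨Equiv.ofBijective f (Finite.injective_iff_bijective.mp hfinj), fun x => hf x⟩
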